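/- Let F be the free group on two generators a, b. Define subgroups G_0 = F and G_{n+1} = the subgroup of F generated by {g² : g ∈ G_n}; each G_n is normal of finite index in F. Let X_n = F/G_n be the finite quotient group, on which F acts by left multiplication. Then there exists a sequence of nonempty subsets A_n ⊆ X_n such that: (i) |A_n| → ∞ as n → ∞; (ii) |A_n|/|X_n| → 0 as n → ∞; and (iii) for each s ∈ {a, b}, |(s·A_n) Δ A_n|/|A_n| → 0 as n → ∞, where s·A = {s·x : x ∈ A} and Δ denotes symmetric difference. -/

import Mathlib

open Filter Subgroup Multiplicative

lemma closure_normal_of_conj' {G : Type*} [Group G] (S : Set G)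
    (h : ∀ g ∈ S, ∀ x : G, x * g * x⁻¹ ∈ S) : (Subgroup.closure S).Normal := by
  constructor
  intro n hn g
  induction hn using Subgroup.closure_induction with
  | mem y hy => exact subset_closure (h y hy g)
  | one => simpa using one_mem _
  | mul x y hx hy ihx ihy =>
      have := mul_mem ihx ihy
      convert this using 1
      group
  | inv x hx ihx =>
      have := inv_mem ihx
      convert this using 1
      group

/-- exponent-2 groups are commutative -/
lemma mul_comm_of_sq {G : Type*} [Group G] (h : ∀ x : G, x * x = 1) (a b : G) :
    a * b = b * a := by
  have hinv : ∀ x : G, x⁻¹ = x := fun x =>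
    inv_eq_of_mul_eq_one_right (h x)
  calc a * b = (a * b)⁻¹ := (hinv _).symm
    _ = b⁻¹ * a⁻¹ := by rw [mul_inv_rev]
    _ = b * a := by rw [hinv, hinv]

lemma step_finiteIndex' {F : Type*} [Group F] [Group.FG F] (H : Subgroup F)
    (hH : H.FiniteIndex) (hK : Subgroup.closure {x : F | ∃ g ∈ H, x = g ^ 2} ≤ H)
    (hKnormal : (Subgroup.closure {x : F | ∃ g ∈ H, x = g ^ 2}).Normal) :
    (Subgroup.closure {x : F | ∃ g ∈ H, x = g ^ 2}).FiniteIndex := by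
  set K := Subgroup.closure {x : F | ∃ g ∈ H, x = g ^ 2} with hKdef
  haveI := hH
  haveI : Group.FG H := Subgroup.fg_of_index_ne_zero H
  set K' : Subgroup H := K.subgroupOf H with hK'def
  haveI : K'.Normal := by
    constructor
    intro n hn g
    simp only [hK'def, Subgroup.mem_subgroupOf] at hn ⊢
    exact hKnormal.conj_mem _ hn _
  -- quotient H ⧸ K' has exponent 2
  have hsq : ∀ x : H ⧸ K', x * x = 1 := by
    intro x
    induction x using QuotientGroup.induction_on with
    | H h =>
      rw [← QuotientGroup.mk_mul, QuotientGroup.eq_one_iff]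
      simp only [hK'def, Subgroup.mem_subgroupOf]
      exact subset_closure ⟨(h : F), h.2, (sq (h : F)).symm⟩
  letI : CommGroup (H ⧸ K') :=
    { (inferInstance : Group (H ⧸ K')) with mul_comm := mul_comm_of_sq hsq }
  haveI : Group.FG (H ⧸ K') := by
    exact Group.fg_of_surjective (QuotientGroup.mk'_surjective K')
  have htor : Monoid.IsTorsion (H ⧸ K') := by
    intro x
    exact isOfFinOrder_iff_pow_eq_one.mpr ⟨2, by norm_num, by rw [sq]; exact hsq x⟩
  haveI : Finite (H ⧸ K') := CommGroup.finite_of_fg_torsion _ htor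
  haveI : K'.FiniteIndex := Subgroup.finiteIndex_of_finite_quotient (H := K')
  constructor
  rw [← Subgroup.relIndex_mul_index hK]
  exact mul_ne_zero (by exact (inferInstance : K'.FiniteIndex).index_ne_zero) hH.index_ne_zero

instance : Group.FG (FreeGroup (Fin 2)) := by
  rw [Group.fg_iff]
  exact ⟨Set.range FreeGroup.of, FreeGroup.closure_range_of _, Set.finite_range _⟩

lemma ncard_preimage_hom' {X T : Type*} [Group X] [Group T] [Finite X] (ψ : X →* T)
    (hs : Function.Surjective ψ) (S : Set T) :
    (ψ ⁻¹' S).ncard = S.ncard * Nat.card ψ.ker := by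
  classical
  have hT : Finite T := Finite.of_surjective ψ hs
  let σ := Function.surjInv hs
  have hσ : ∀ t, ψ (σ t) = t := Function.surjInv_eq hs
  have e : (ψ ⁻¹' S) ≃ S × ψ.ker :=
    { toFun := fun x => (⟨ψ x, x.2⟩, ⟨(x : X) * (σ (ψ x))⁻¹, by
        simp [MonoidHom.mem_ker, map_mul, hσ]⟩)
      invFun := fun p => ⟨(p.2 : X) * σ (p.1 : T), by
        have : ψ (p.2 : X) = 1 := p.2.2
        simp [Set.mem_preimage, map_mul, hσ, this, (p.1).2]⟩
      left_inv := fun x => by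
        ext
        simp [mul_assoc, hσ]
      right_inv := fun p => by
        have h1 : ψ ((p.2 : X) * σ (p.1 : T)) = (p.1 : T) := by
          have : ψ (p.2 : X) = 1 := p.2.2
          simp [map_mul, this, hσ]
        ext
        · simp [h1]
        · simp [h1, mul_assoc] }
  rw [← Nat.card_coe_set_eq, ← Nat.card_coe_set_eq, Nat.card_congr e, Nat.card_prod]

lemma card_eq_card_mul_card_ker' {X T : Type*} [Group X] [Group T] [Finite X] (ψ : X →* T)
    (hs : Function.Surjective ψ) :
    Nat.card X = Nat.card T * Nat.card ψ.ker := by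
  have := ncard_preimage_hom' ψ hs Set.univ
  simpa [Set.ncard_univ] using this

lemma ncard_val_lt' {N L : ℕ} [NeZero N] (hLN : L ≤ N) :
    {x : ZMod N | x.val < L}.ncard = L := by
  have e : {x : ZMod N | x.val < L} ≃ Fin L :=
    { toFun := fun x => ⟨(x : ZMod N).val, x.2⟩
      invFun := fun k => ⟨((k : ℕ) : ZMod N), by
        simp only [Set.mem_setOf_eq]
        rw [ZMod.val_cast_of_lt (lt_of_lt_of_le k.2 hLN)]
        exact k.2⟩
      left_inv := fun x => by
        ext
        exact ZMod.natCast_rightInverse _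
      right_inv := fun k => by
        ext
        exact ZMod.val_cast_of_lt (lt_of_lt_of_le k.2 hLN) }
  rw [← Nat.card_coe_set_eq, Nat.card_congr e, Nat.card_eq_fintype_card, Fintype.card_fin]

lemma zmod_boundary' {N L : ℕ} [NeZero N] (hL : 0 < L) (hLN : L ≤ N) (x : ZMod N)
    (h : ¬ (((x - 1).val < L) ↔ (x.val < L))) : x = 0 ∨ x = (L : ZMod N) := by
  have hN : 0 < N := Nat.pos_of_ne_zero (NeZero.ne N)
  rw [iff_iff_implies_and_implies, not_and_or] at h
  rcases h with h | h
  · -- (x-1).val < L and not x.val < L : x = L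
    rw [_root_.not_imp] at h
    obtain ⟨h1, h2⟩ := h
    right
    obtain ⟨k, hk⟩ : ∃ k : ℕ, (x - 1).val = k := ⟨_, rfl⟩
    have hkN : k < N := hk ▸ (x - 1).val_lt
    have hx : x = ((k + 1 : ℕ) : ZMod N) := by
      push_cast
      rw [← hk, ZMod.natCast_rightInverse _]
      ring
    rcases lt_or_eq_of_le (Nat.succ_le_of_lt hkN) with hlt | heq
    · have hv : (((k + 1 : ℕ) : ZMod N)).val = k + 1 := ZMod.val_cast_of_lt hlt
      have hval : x.val = k + 1 := by rw [hx]; exact hv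
      have hxL : x.val = L := le_antisymm (by rw [hval]; omega) (not_lt.mp h2)
      rw [hx, show k + 1 = L by omega]
    · exfalso
      have : x = 0 := by
        rw [hx, show k + 1 = N from heq]
        exact ZMod.natCast_self N
      rw [this] at h2
      simp only [ZMod.val_zero] at h2
      omega
  · -- x.val < L and not (x-1).val < L : x = 0
    rw [_root_.not_imp] at h
    obtain ⟨h1, h2⟩ := h
    left
    by_contra hx0
    have hpos : 0 < x.val := Nat.pos_of_ne_zero (fun hh => hx0 ((ZMod.val_eq_zero x).mp hh))
    have hx : x - 1 = ((x.val - 1 : ℕ) : ZMod N) := by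
      rw [Nat.cast_sub hpos, ZMod.natCast_rightInverse x, Nat.cast_one]
    have : (x - 1).val = x.val - 1 := by
      rw [hx]
      exact ZMod.val_cast_of_lt (by have := x.val_lt; omega)
    omega



def fZ' : (FreeGroup (Fin 2)) →* Multiplicative (ℤ × ℤ) :=
  FreeGroup.lift (fun i => ofAdd (if i = 0 then ((1:ℤ),(0:ℤ)) else (0,1)))

lemma fZ'_div (G : ℕ → Subgroup (FreeGroup (Fin 2))) (hG0 : G 0 = ⊤)
    (hGs : ∀ n, G (n + 1) = Subgroup.closure
      {x : (FreeGroup (Fin 2)) | ∃ g ∈ G n, x = g ^ 2}) :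
    ∀ n, ∀ g ∈ G n, ∃ p : ℤ × ℤ, toAdd (fZ' g) = (2 ^ n : ℤ) • p := by
  intro n
  induction n with
  | zero => exact fun g _ => ⟨toAdd (fZ' g), by simp⟩
  | succ n ih =>
    intro g hg
    rw [hGs n] at hg
    induction hg using Subgroup.closure_induction with
    | mem x hx =>
      obtain ⟨g', hg', rfl⟩ := hx
      obtain ⟨p, hp⟩ := ih g' hg'
      exact ⟨p, by
        rw [map_pow, toAdd_pow, hp, ← natCast_zsmul, smul_smul]
        norm_num [pow_succ, mul_comm]⟩
    | one => exact ⟨0, by simp⟩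
    | mul x y hx hy ihx ihy =>
      obtain ⟨p, hp⟩ := ihx
      obtain ⟨q, hq⟩ := ihy
      exact ⟨p + q, by rw [map_mul, toAdd_mul, hp, hq, smul_add]⟩
    | inv x hx ihx =>
      obtain ⟨p, hp⟩ := ihx
      exact ⟨-p, by rw [map_inv, toAdd_inv, hp, smul_neg]⟩

def qh' (n : ℕ) : (FreeGroup (Fin 2)) →* Multiplicative (ZMod (2 ^ n) × ZMod (2 ^ n)) :=
  (AddMonoidHom.toMultiplicative
    ((Int.castAddHom (ZMod (2 ^ n))).prodMap (Int.castAddHom (ZMod (2 ^ n))))).comp fZ'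

lemma qh_ker' (G : ℕ → Subgroup (FreeGroup (Fin 2))) (hG0 : G 0 = ⊤)
    (hGs : ∀ n, G (n + 1) = Subgroup.closure
      {x : (FreeGroup (Fin 2)) | ∃ g ∈ G n, x = g ^ 2}) (n : ℕ) :
    G n ≤ (qh' n).ker := by
  intro g hg
  obtain ⟨p, hp⟩ := fZ'_div G hG0 hGs n g hg
  rw [MonoidHom.mem_ker]
  simp only [qh', MonoidHom.comp_apply]
  rw [← ofAdd_toAdd (fZ' g), hp]
  apply toAdd.injective
  simp only [AddMonoidHom.toMultiplicative_apply_apply, toAdd_ofAdd, toAdd_one]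
  have h2 : ((2 ^ n : ℤ) : ZMod (2 ^ n)) = 0 := by
    push_cast
    exact_mod_cast ZMod.natCast_self (2 ^ n)
  ext
  · simp [Prod.smul_def, smul_eq_mul, h2]
  · simp [Prod.smul_def, smul_eq_mul, h2]

lemma ncard_prod' {α β : Type*} (s : Set α) (t : Set β) :
    (s ×ˢ t).ncard = s.ncard * t.ncard := by
  rw [← Nat.card_coe_set_eq, ← Nat.card_coe_set_eq, ← Nat.card_coe_set_eq,
    Nat.card_congr (Equiv.Set.prod s t), Nat.card_prod]

lemma mem_ofAdd_prod' {N : ℕ} (s t : Set (ZMod N)) (y : Multiplicative (ZMod N × ZMod N)) :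
    y ∈ ⇑ofAdd '' (s ×ˢ t) ↔ (toAdd y).1 ∈ s ∧ (toAdd y).2 ∈ t := by
  rw [Equiv.image_eq_preimage_symm]
  rfl

lemma ncard_ofAdd_prod' {N : ℕ} (s t : Set (ZMod N)) :
    (⇑ofAdd '' (s ×ˢ t) : Set (Multiplicative (ZMod N × ZMod N))).ncard
      = s.ncard * t.ncard := by
  rw [Set.ncard_image_of_injective _ (Multiplicative.ofAdd.injective), ncard_prod']

lemma symmDiff_box_le' {N L : ℕ} [NeZero N] (hL : 0 < L) (hLN : L ≤ N)
    (u : Multiplicative (ZMod N × ZMod N))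
    (hu : toAdd u = ((1 : ZMod N), (0 : ZMod N)) ∨ toAdd u = ((0 : ZMod N), (1 : ZMod N))) :
    (symmDiff ((fun t => u * t) '' (⇑ofAdd '' ({x : ZMod N | x.val < L} ×ˢ {x : ZMod N | x.val < L})))
      (⇑ofAdd '' ({x : ZMod N | x.val < L} ×ˢ {x : ZMod N | x.val < L}))).ncard ≤ 2 * L := by
  set V := {x : ZMod N | x.val < L} with hV
  set B := ⇑ofAdd '' (V ×ˢ V) with hB
  have himg : (fun t => u * t) '' B = {y | (toAdd (u⁻¹ * y)).1 ∈ V ∧ (toAdd (u⁻¹ * y)).2 ∈ V} := by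
    ext y
    constructor
    · rintro ⟨x, hx, rfl⟩
      rw [hB, mem_ofAdd_prod'] at hx
      simpa using hx
    · intro hy
      refine ⟨u⁻¹ * y, ?_, by group⟩
      rw [hB, mem_ofAdd_prod']
      exact hy
  have hmemB : ∀ y, y ∈ B ↔ (toAdd y).1 ∈ V ∧ (toAdd y).2 ∈ V := fun y => mem_ofAdd_prod' V V y
  rcases hu with hu | hu
  · -- shift in first coordinate
    have hsub : symmDiff ((fun t => u * t) '' B) B
        ⊆ ⇑ofAdd '' (({0, (L : ZMod N)} : Set (ZMod N)) ×ˢ V) := by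
      intro y hy
      rw [Set.mem_symmDiff] at hy
      rw [mem_ofAdd_prod']
      have hshift : (toAdd (u⁻¹ * y)).1 = (toAdd y).1 - 1 ∧ (toAdd (u⁻¹ * y)).2 = (toAdd y).2 := by
        rw [toAdd_mul, toAdd_inv, hu]
        constructor <;> simp [sub_eq_neg_add]
      rcases hy with ⟨h1, h2⟩ | ⟨h1, h2⟩
      · rw [himg, Set.mem_setOf_eq, hshift.1, hshift.2] at h1
        rw [hmemB] at h2
        have hy2 : (toAdd y).2 ∈ V := h1.2
        have hx1 : ¬ (toAdd y).1 ∈ V := fun hc => h2 ⟨hc, hy2⟩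
        refine ⟨zmod_boundary' hL hLN _ (fun hiff => hx1 (hiff.mp h1.1)), hy2⟩
      · rw [hmemB] at h1
        rw [himg, Set.mem_setOf_eq, hshift.1, hshift.2] at h2
        have hy2 : (toAdd y).2 ∈ V := h1.2
        have hx1 : ¬ ((toAdd y).1 - 1).val < L := fun hc => h2 ⟨hc, hy2⟩
        refine ⟨zmod_boundary' hL hLN _ (fun hiff => hx1 (hiff.mpr h1.1)), hy2⟩
    calc (symmDiff ((fun t => u * t) '' B) B).ncard
        ≤ (⇑ofAdd '' (({0, (L : ZMod N)} : Set (ZMod N)) ×ˢ V)).ncard := by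
          apply Set.ncard_le_ncard hsub (Set.toFinite _)
      _ = ({0, (L : ZMod N)} : Set (ZMod N)).ncard * V.ncard := ncard_ofAdd_prod' _ _
      _ ≤ 2 * L := by
          have h1 : ({0, (L : ZMod N)} : Set (ZMod N)).ncard ≤ 2 := by
            apply le_trans (Set.ncard_insert_le _ _)
            simp
          have h2 : V.ncard = L := ncard_val_lt' hLN
          rw [h2]
          exact Nat.mul_le_mul_right L h1
  · -- shift in second coordinate
    have hsub : symmDiff ((fun t => u * t) '' B) B
        ⊆ ⇑ofAdd '' (V ×ˢ ({0, (L : ZMod N)} : Set (ZMod N))) := by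
      intro y hy
      rw [Set.mem_symmDiff] at hy
      rw [mem_ofAdd_prod']
      have hshift : (toAdd (u⁻¹ * y)).1 = (toAdd y).1 ∧ (toAdd (u⁻¹ * y)).2 = (toAdd y).2 - 1 := by
        rw [toAdd_mul, toAdd_inv, hu]
        constructor <;> simp [sub_eq_neg_add]
      rcases hy with ⟨h1, h2⟩ | ⟨h1, h2⟩
      · rw [himg, Set.mem_setOf_eq, hshift.1, hshift.2] at h1
        rw [hmemB] at h2
        have hy1 : (toAdd y).1 ∈ V := h1.1
        have hx2 : ¬ (toAdd y).2 ∈ V := fun hc => h2 ⟨hy1, hc⟩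
        refine ⟨hy1, zmod_boundary' hL hLN _ (fun hiff => hx2 (hiff.mp h1.2))⟩
      · rw [hmemB] at h1
        rw [himg, Set.mem_setOf_eq, hshift.1, hshift.2] at h2
        have hy1 : (toAdd y).1 ∈ V := h1.1
        have hx2 : ¬ ((toAdd y).2 - 1).val < L := fun hc => h2 ⟨hy1, hc⟩
        refine ⟨hy1, zmod_boundary' hL hLN _ (fun hiff => hx2 (hiff.mpr h1.2))⟩
    calc (symmDiff ((fun t => u * t) '' B) B).ncard
        ≤ (⇑ofAdd '' (V ×ˢ ({0, (L : ZMod N)} : Set (ZMod N)))).ncard := by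
          apply Set.ncard_le_ncard hsub (Set.toFinite _)
      _ = V.ncard * ({0, (L : ZMod N)} : Set (ZMod N)).ncard := ncard_ofAdd_prod' _ _
      _ ≤ 2 * L := by
          have h1 : ({0, (L : ZMod N)} : Set (ZMod N)).ncard ≤ 2 := by
            apply le_trans (Set.ncard_insert_le _ _)
            simp
          have h2 : V.ncard = L := ncard_val_lt' hLN
          rw [h2, mul_comm]
          exact Nat.mul_le_mul_right L h1

lemma qh_of0 (n : ℕ) :
    qh' n (FreeGroup.of 0) = ofAdd ((1 : ZMod (2 ^ n)), (0 : ZMod (2 ^ n))) := by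
  simp [qh', fZ', FreeGroup.lift_apply_of]

lemma qh_of1 (n : ℕ) :
    qh' n (FreeGroup.of 1) = ofAdd ((0 : ZMod (2 ^ n)), (1 : ZMod (2 ^ n))) := by
  simp [qh', fZ', FreeGroup.lift_apply_of]

lemma qh_surj (n : ℕ) : Function.Surjective (qh' n) := by
  haveI : NeZero (2 ^ n) := ⟨pow_ne_zero n two_ne_zero⟩
  intro t
  refine ⟨FreeGroup.of 0 ^ (toAdd t).1.val * FreeGroup.of 1 ^ (toAdd t).2.val, ?_⟩
  rw [map_mul, map_pow, map_pow, qh_of0, qh_of1]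
  apply Multiplicative.toAdd.injective
  rw [toAdd_mul, toAdd_pow, toAdd_pow, toAdd_ofAdd, toAdd_ofAdd]
  have e1 : ((toAdd t).1.val : ZMod (2 ^ n)) = (toAdd t).1 := ZMod.natCast_rightInverse _
  have e2 : ((toAdd t).2.val : ZMod (2 ^ n)) = (toAdd t).2 := ZMod.natCast_rightInverse _
  ext
  · simpa [Prod.smul_def, nsmul_eq_mul] using e1
  · simpa [Prod.smul_def, nsmul_eq_mul] using e2

lemma image_smul_preimage {X T : Type*} [Group X] [Group T] (ψ : X →* T) (u : X) (B : Set T) :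
    (fun x => u * x) '' (ψ ⁻¹' B) = ψ ⁻¹' ((fun t => ψ u * t) '' B) := by
  ext y
  constructor
  · rintro ⟨x, hx, rfl⟩
    exact ⟨ψ x, hx, by simp [map_mul]⟩
  · rintro ⟨t, ht, hty⟩
    refine ⟨u⁻¹ * y, ?_, by group⟩
    have hψ : ψ (u⁻¹ * y) = t := by
      rw [map_mul, map_inv, ← hty]
      group
    rw [Set.mem_preimage, hψ]
    exact ht

/-- For the free group F on two generators a, b and the iterated
square subgroups G_n (normal of finite index), there are nonempty sets
A_n ⊆ F/G_n with |A_n| → ∞, |A_n|/|X_n| → 0, and |(s·A_n) Δ A_n|/|A_n| → 0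
for s ∈ {a, b}. -/
theorem stmt_17 (a b : FreeGroup (Fin 2))
    (ha : a = FreeGroup.of 0) (hb : b = FreeGroup.of 1)
    (G : ℕ → Subgroup (FreeGroup (Fin 2))) (hG0 : G 0 = ⊤)
    (hGs : ∀ n, G (n + 1) = Subgroup.closure
      {x : FreeGroup (Fin 2) | ∃ g ∈ G n, x = g ^ 2}) :
    (∀ n, (G n).Normal ∧ (G n).FiniteIndex) ∧
    ∃ A : ∀ n : ℕ, Set (FreeGroup (Fin 2) ⧸ G n),
      (∀ n, (A n).Nonempty) ∧
      Tendsto (fun n => (A n).ncard) atTop atTop ∧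
      Tendsto (fun n => ((A n).ncard : ℝ) / (Nat.card (FreeGroup (Fin 2) ⧸ G n) : ℝ))
        atTop (nhds 0) ∧
      (∀ s ∈ ({a, b} : Set (FreeGroup (Fin 2))),
        Tendsto (fun n =>
            ((symmDiff ((fun x => s • x) '' A n) (A n)).ncard : ℝ) / ((A n).ncard : ℝ))
          atTop (nhds 0)) := by
  -- Part 1 : normality and finite index
  have hNF : ∀ n, (G n).Normal ∧ (G n).FiniteIndex := by
    intro n
    induction n with
    | zero =>
      rw [hG0]
      exact ⟨inferInstance, inferInstance⟩
    | succ n ih =>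
      obtain ⟨hN, hFI⟩ := ih
      have hconj : ∀ g ∈ {x : FreeGroup (Fin 2) | ∃ g ∈ G n, x = g ^ 2},
          ∀ x : FreeGroup (Fin 2),
          x * g * x⁻¹ ∈ {x : FreeGroup (Fin 2) | ∃ g ∈ G n, x = g ^ 2} := by
        rintro g ⟨g', hg', rfl⟩ x
        refine ⟨x * g' * x⁻¹, hN.conj_mem g' hg' x, ?_⟩
        rw [sq, sq]
        group
      have hNorm := closure_normal_of_conj' _ hconj
      have hle : Subgroup.closure {x : FreeGroup (Fin 2) | ∃ g ∈ G n, x = g ^ 2} ≤ G n := by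
        rw [Subgroup.closure_le]
        rintro x ⟨g', hg', rfl⟩
        exact pow_mem hg' 2
      rw [hGs n]
      exact ⟨hNorm, step_finiteIndex' (G n) hFI hle hNorm⟩
  refine ⟨hNF, ?_⟩
  -- setup
  haveI hfin : ∀ n, Finite (FreeGroup (Fin 2) ⧸ G n) := by
    intro n
    haveI := (hNF n).2
    infer_instance
  haveI hNZ : ∀ n, NeZero (2 ^ n) := fun n => ⟨pow_ne_zero n two_ne_zero⟩
  haveI hnorm : ∀ n, (G n).Normal := fun n => (hNF n).1
  set L : ℕ → ℕ := fun n => 2 ^ (n - n / 2) with hLdef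
  have hLpos : ∀ n, 0 < L n := fun n => Nat.pow_pos (by norm_num)
  have hLN : ∀ n, L n ≤ 2 ^ n := fun n => Nat.pow_le_pow_right (by norm_num) (by omega)
  let B : ∀ n, Set (Multiplicative (ZMod (2 ^ n) × ZMod (2 ^ n))) :=
    fun n => ⇑ofAdd '' ({x : ZMod (2 ^ n) | x.val < L n} ×ˢ {x : ZMod (2 ^ n) | x.val < L n})
  let ψ : ∀ n, (FreeGroup (Fin 2) ⧸ G n) →* Multiplicative (ZMod (2 ^ n) × ZMod (2 ^ n)) :=
    fun n => QuotientGroup.lift (G n) (qh' n) (qh_ker' G hG0 hGs n)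
  have hψmk : ∀ n (x : FreeGroup (Fin 2)), ψ n (QuotientGroup.mk x) = qh' n x :=
    fun n x => rfl
  have hψsurj : ∀ n, Function.Surjective (ψ n) := by
    intro n t
    obtain ⟨x, hx⟩ := qh_surj n t
    exact ⟨QuotientGroup.mk x, hx⟩
  have hBcard : ∀ n, (B n).ncard = L n * L n := by
    intro n
    rw [show B n = ⇑ofAdd '' ({x : ZMod (2 ^ n) | x.val < L n} ×ˢ {x : ZMod (2 ^ n) | x.val < L n}) from rfl,
      ncard_ofAdd_prod', ncard_val_lt' (hLN n)]
  have hKpos : ∀ n, 0 < Nat.card (ψ n).ker := fun n => Nat.card_pos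
  have hAcard : ∀ n, ((ψ n) ⁻¹' (B n)).ncard = (L n * L n) * Nat.card (ψ n).ker := by
    intro n
    rw [ncard_preimage_hom' _ (hψsurj n), hBcard]
  have hXcard : ∀ n, Nat.card (FreeGroup (Fin 2) ⧸ G n)
      = (2 ^ n * 2 ^ n) * Nat.card (ψ n).ker := by
    intro n
    rw [card_eq_card_mul_card_ker' (ψ n) (hψsurj n)]
    congr 1
    rw [Nat.card_congr (Multiplicative.toAdd (α := ZMod (2 ^ n) × ZMod (2 ^ n))),
      Nat.card_prod, Nat.card_zmod]
  refine ⟨fun n => (ψ n) ⁻¹' (B n), ?_, ?_, ?_, ?_⟩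
  · -- nonempty
    intro n
    obtain ⟨x, hx⟩ := hψsurj n (ofAdd ((0 : ZMod (2 ^ n)), (0 : ZMod (2 ^ n))))
    refine ⟨x, ?_⟩
    rw [Set.mem_preimage, hx, mem_ofAdd_prod']
    simp [ZMod.val_zero, hLpos n]
  · -- ncard to infinity
    apply tendsto_atTop_mono _ tendsto_id
    intro n
    rw [hAcard n]
    have h1 : 2 ^ n ≤ L n * L n := by
      rw [← pow_add]
      exact Nat.pow_le_pow_right (by norm_num) (by omega)
    calc n ≤ 2 ^ n := (Nat.lt_two_pow_self (n := n)).le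
      _ ≤ L n * L n := h1
      _ ≤ (L n * L n) * Nat.card (ψ n).ker := Nat.le_mul_of_pos_right _ (hKpos n)
  · -- density to zero
    apply squeeze_zero (g := fun n => 2 * (1 / 2 : ℝ) ^ n)
    · intro n
      positivity
    · intro n
      rw [hAcard n, hXcard n]
      push_cast
      rw [mul_div_mul_right _ _ (by exact_mod_cast (hKpos n).ne' : (Nat.card (ψ n).ker : ℝ) ≠ 0)]
      have hnum : ((L n : ℝ) * L n) ≤ 2 * 2 ^ n := by
        have : L n * L n ≤ 2 * 2 ^ n := by
          rw [← pow_add, show 2 * 2 ^ n = 2 ^ (n + 1) from (pow_succ' 2 n).symm]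
          exact Nat.pow_le_pow_right (by norm_num) (by omega)
        exact_mod_cast this
      have hden : (0 : ℝ) < (2 : ℝ) ^ n * 2 ^ n := by positivity
      rw [div_le_iff₀ hden]
      calc ((L n : ℝ) * L n) ≤ 2 * 2 ^ n := hnum
        _ = 2 * (1 / 2 : ℝ) ^ n * ((2 : ℝ) ^ n * 2 ^ n) := by
            rw [mul_assoc, show ((1 / 2 : ℝ)) ^ n * ((2 : ℝ) ^ n * 2 ^ n) = 2 ^ n from by
              rw [← mul_assoc, ← mul_pow]; norm_num]
    · simpa using (tendsto_pow_atTop_nhds_zero_of_lt_one (by norm_num : (0:ℝ) ≤ 1/2)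
        (by norm_num)).const_mul 2
  · -- almost invariance
    intro s hs
    have hqs : ∀ n, toAdd (qh' n s) = ((1 : ZMod (2 ^ n)), (0 : ZMod (2 ^ n)))
        ∨ toAdd (qh' n s) = ((0 : ZMod (2 ^ n)), (1 : ZMod (2 ^ n))) := by
      rcases hs with rfl | hs
      · intro n; left; rw [ha, qh_of0, toAdd_ofAdd]
      · intro n; right
        rw [Set.mem_singleton_iff] at hs
        rw [hs, hb, qh_of1, toAdd_ofAdd]
    have hnum : ∀ n, (symmDiff ((fun x => s • x) '' ((ψ n) ⁻¹' (B n))) ((ψ n) ⁻¹' (B n))).ncard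
        ≤ (2 * L n) * Nat.card (ψ n).ker := by
      intro n
      have hfun : (fun x : FreeGroup (Fin 2) ⧸ G n => s • x)
          = (fun x => (QuotientGroup.mk s) * x) := by
        funext x
        induction x using QuotientGroup.induction_on with
        | H z => rfl
      rw [hfun, image_smul_preimage (ψ n) (QuotientGroup.mk s) (B n), hψmk,
        ← Set.preimage_symmDiff, ncard_preimage_hom' _ (hψsurj n)]
      exact Nat.mul_le_mul_right _ (symmDiff_box_le' (hLpos n) (hLN n) _ (hqs n))
    apply squeeze_zero (g := fun n => 2 / (2 : ℝ) ^ (n - n / 2))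
    · intro n
      positivity
    · intro n
      have hden : (0 : ℝ) < (((ψ n) ⁻¹' (B n)).ncard : ℝ) := by
        rw [hAcard n]
        have := hLpos n
        have := hKpos n
        positivity
      rw [div_le_div_iff₀ hden (by positivity)]
      have hbound := hnum n
      calc ((symmDiff ((fun x => s • x) '' ((ψ n) ⁻¹' (B n))) ((ψ n) ⁻¹' (B n))).ncard : ℝ)
            * (2 : ℝ) ^ (n - n / 2)
          ≤ (((2 * L n) * Nat.card (ψ n).ker : ℕ) : ℝ) * (2 : ℝ) ^ (n - n / 2) := by
            apply mul_le_mul_of_nonneg_right _ (by positivity)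
            exact_mod_cast hbound
        _ = 2 * (((ψ n) ⁻¹' (B n)).ncard : ℝ) := by
            rw [hAcard n]
            push_cast
            rw [show ((2 : ℝ) ^ (n - n / 2)) = (L n : ℝ) by push_cast [hLdef]; ring]
            ring
    · have h1 : Tendsto (fun k : ℕ => 2 / (2 : ℝ) ^ k) atTop (nhds 0) := by
        simpa [div_eq_mul_inv, ← inv_pow] using
          (tendsto_pow_atTop_nhds_zero_of_lt_one (by norm_num : (0:ℝ) ≤ 2⁻¹)
            (by norm_num)).const_mul 2
      have h2 : Tendsto (fun n : ℕ => n - n / 2) atTop atTop :=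
        tendsto_atTop_atTop.mpr fun c => ⟨2 * c, fun n hn => by omega⟩
      exact h1.comp h2
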